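/- Let c > 0, let K : [0,∞) → ℝ be continuous, and let f solve f'' + K·f = 0 on [0,∞) with f(0) = c and f'(0) = 0. If K(0) > 0, f'(t) ≠ 0 for every t > 0, and f(t) > 0 for all t ∈ [0,∞), then there exists t > 0 with K(t) < 0. -/

import Mathlib

open Set

/-- With `f` a C² solution of `f'' + K⬝f = 0` on `[0,∞)`, `f 0 = c > 0`,
`f' 0 = 0`, `K 0 > 0`, `f' t ≠ 0` for all `t > 0`, and `f > 0` on `[0,∞)`, there exists
`t > 0` with `K t < 0`. -/
theorem stmt1 (c : ℝ) (hc : 0 < c) (K f f' f'' : ℝ → ℝ)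
    (hKcont : ContinuousOn K (Ici 0))
    (hder1 : ∀ t ∈ Ici (0:ℝ), HasDerivWithinAt f (f' t) (Ici 0) t)
    (hder2 : ∀ t ∈ Ici (0:ℝ), HasDerivWithinAt f' (f'' t) (Ici 0) t)
    (hf''cont : ContinuousOn f'' (Ici 0))
    (hode : ∀ t ∈ Ici (0:ℝ), f'' t + K t * f t = 0)
    (hf0 : f 0 = c) (hf'0 : f' 0 = 0)
    (hK0 : 0 < K 0)
    (hne : ∀ t > (0:ℝ), f' t ≠ 0)
    (hfpos : ∀ t ∈ Ici (0:ℝ), 0 < f t) :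
    ∃ t > (0:ℝ), K t < 0 := by
  by_contra h
  push_neg at h
  have hKnn : ∀ t ∈ Ici (0:ℝ), 0 ≤ K t := by
    intro t ht
    rcases eq_or_lt_of_le (mem_Ici.1 ht) with h0 | h0
    · simpa [← h0] using hK0.le
    · exact h t h0
  have hf''np : ∀ t ∈ Ici (0:ℝ), f'' t ≤ 0 := by
    intro t ht
    nlinarith [hode t ht, hKnn t ht, hfpos t ht]
  have hintIci : interior (Ici (0:ℝ)) = Ioi 0 := interior_Ici
  have hanti : AntitoneOn f' (Ici 0) := by
    apply antitoneOn_of_hasDerivWithinAt_nonpos (convex_Ici 0)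
      (fun t ht => (hder2 t ht).continuousWithinAt)
    · intro x hx
      rw [hintIci] at hx ⊢
      exact (hder2 x (mem_Ici.2 (le_of_lt hx))).mono (Ioi_subset_Ici le_rfl)
    · intro x hx
      rw [hintIci] at hx
      exact hf''np x (mem_Ici.2 (le_of_lt hx))
  have hf'neg : ∀ t > (0:ℝ), f' t < 0 := by
    intro t ht
    have := hanti (self_mem_Ici) (mem_Ici.2 ht.le) ht.le
    rw [hf'0] at this
    exact lt_of_le_of_ne this (hne t ht)
  set m := f' 1 with hm
  have hmneg : m < 0 := hf'neg 1 one_pos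
  -- g = f - m * t is antitone on Ici 1
  have hanti2 : AntitoneOn (fun t => f t - m * t) (Ici 1) := by
    apply antitoneOn_of_hasDerivWithinAt_nonpos (convex_Ici 1)
      (f' := fun t => f' t - m)
    · intro t ht
      have h0 : (1:ℝ) ≥ 0 := by norm_num
      exact ((hder1 t (le_trans h0 ht)).continuousWithinAt.mono
        (Ici_subset_Ici.2 h0)).sub ((continuous_const.mul continuous_id).continuousOn t ht)
    · intro x hx
      rw [interior_Ici] at hx ⊢
      have hx0 : (0:ℝ) ≤ x := by linarith [mem_Ioi.1 hx]
      have h1 : HasDerivWithinAt f (f' x) (Ioi 1) x :=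
        (hder1 x hx0).mono (fun y hy => mem_Ici.2 (le_trans zero_le_one (le_of_lt hy)))
      exact (h1.sub ((hasDerivAt_id' x).const_mul m).hasDerivWithinAt).congr_deriv (by simp)
    · intro x hx
      rw [interior_Ici] at hx
      have : f' x ≤ m := hanti (by norm_num) (by simp; linarith [mem_Ioi.1 hx])
        (le_of_lt (mem_Ioi.1 hx))
      linarith
  set T := 2 - f 1 / m with hT
  have hf1 : 0 < f 1 := hfpos 1 (by norm_num)
  have hT1 : (1:ℝ) ≤ T := by
    have : f 1 / m < 0 := div_neg_of_pos_of_neg hf1 hmneg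
    simp only [hT]; linarith
  have hgle := hanti2 (self_mem_Ici) (mem_Ici.2 hT1) hT1
  simp only at hgle
  have hTpos : (0:ℝ) ≤ T := by linarith
  have hfT := hfpos T hTpos
  have hmT : f 1 / m * m = f 1 := div_mul_cancel₀ _ hmneg.ne
  have hmT2 : m * T = 2 * m - f 1 := by rw [hT]; linear_combination -hmT
  linarith [hgle, hfT, hmneg, hmT2]
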